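/- arXiv:1812.05311 — 3 statements merged into one kernel-verified Lean document; each statement's English description precedes it below -/
import Mathlib

section
/- Suppose q is odd. Then 1 ≠ a_k for all 1 ≤ k ≤ t−1, or −1 ≠ a_k for all 1 ≤ k ≤ t−1; that is, it is possible to choose b = 1 or b = −1 as an element satisfying b ≠ a_k for all 1 ≤ k ≤ t−1. -/
open Polynomial

noncomputable section

abbrev SL2 (F : Type*) [Field F] := Matrix.SpecialLinearGroup (Fin 2) F

abbrev PSL2 (F : Type*) [Field F] := SL2 F ⧸ Subgroup.center (SL2 F)

/-- image in `PSL₂(F)` of the matrix `[[1, x], [0, 1]]`. -/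
def uu {F : Type*} [Field F] (x : F) : PSL2 F :=
  QuotientGroup.mk ⟨!![1, x; 0, 1], by simp [Matrix.det_fin_two_of]⟩

/-- image in `PSL₂(F)` of the matrix `[[y, 0], [0, y⁻¹]]`. -/
def hh {F : Type*} [Field F] (y : F) (hy : y ≠ 0) : PSL2 F :=
  QuotientGroup.mk ⟨!![y, 0; 0, y⁻¹], by simp [Matrix.det_fin_two_of, mul_inv_cancel₀ hy]⟩

/-- image in `PSL₂(F)` of the matrix `[[0, 1], [-1, 0]]`. -/
def ss {F : Type*} [Field F] : PSL2 F :=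
  QuotientGroup.mk ⟨!![0, 1; -1, 0], by simp [Matrix.det_fin_two_of]⟩

/-- the sequence `a_k`: `a₁ = a`, `a_{k+1} = a - a_k⁻¹` (with junk value `a₀ = 0`). -/
def aSeq {F : Type*} [Field F] (a : F) : ℕ → F
  | 0 => 0
  | k + 1 => a - (aSeq a k)⁻¹

/-- the sequence `b_ℓ`: `b₀ = b`, `b_{ℓ+1} = a - b_ℓ⁻¹`. -/
def bSeq {F : Type*} [Field F] (a b : F) : ℕ → F
  | 0 => b
  | k + 1 => a - (bSeq a b k)⁻¹

/-- `alph a n = α_{n-1}(a)`, the (index-shifted) Dickson polynomial of the second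
kind values: `α_{-1} = 0`, `α₀ = 1`, `α_{n+1} = a·α_n - α_{n-1}`. -/
def alph {F : Type*} [Field F] (a : F) : ℕ → F
  | 0 => 0
  | 1 => 1
  | n + 2 => a * alph a (n + 1) - alph a n

/-- `bet a b n = β_{n-1}(a,b)`: `β_{-1} = 1`, `β_n = b·α_n - α_{n-1}` for `n ≥ 0`. -/
def bet {F : Type*} [Field F] (a b : F) : ℕ → F
  | 0 => 1
  | n + 1 => b * alph a (n + 1) - alph a n

/-- `gam a b n = γ_{n-1}(a,b)` where `γ_n = α_n + b·β_n`. -/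
def gam {F : Type*} [Field F] (a b : F) (n : ℕ) : F := alph a n + b * bet a b n

lemma alph_map {F E : Type*} [Field F] [Field E] (φ : F →+* E) (a : F) :
    ∀ n, φ (alph a n) = alph (φ a) n := by
  intro n
  induction n using Nat.twoStepInduction with
  | zero => simp [alph]
  | one => simp [alph]
  | more n ih1 ih2 => simp [alph, ih1, ih2]

lemma alph_key {E : Type*} [Field E] (A ω : E) (hω : ω ^ 2 + A * ω + 1 = 0) :
    ∀ n, alph A n * ω ^ n * (ω ^ 2 - 1) = (-1) ^ (n + 1) * (ω ^ (2 * n) - 1) * ω := by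
  intro n
  induction n using Nat.twoStepInduction with
  | zero => simp [alph]
  | one => simp [alph]; ring
  | more n ih1 ih2 =>
    show alph A (n + 2) * ω ^ (n + 2) * (ω ^ 2 - 1)
        = (-1) ^ (n + 2 + 1) * (ω ^ (2 * (n + 2)) - 1) * ω
    rw [show alph A (n + 2) = A * alph A (n + 1) - alph A n from rfl]
    linear_combination (A * ω) * ih2 - ω ^ 2 * ih1
      + ((-1) ^ (n + 2) * (ω ^ (2 * n + 2) - 1) * ω) * hω

theorem stmt15 (F : Type*) [Field F] [Fintype F] (q : ℕ) (hq : Fintype.card F = q)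
    (a : F) (hirr : Irreducible (X ^ 2 + C a * X + 1 : F[X]))
    (ω : AlgebraicClosure F) (hroot : aeval ω (X ^ 2 + C a * X + 1 : F[X]) = 0)
    (hord : orderOf ω = q + 1)
    (hqodd : Odd q) (t : ℕ) (ht : t = (q + 1) / Nat.gcd 2 (q + 1)) :
    (∀ k : ℕ, 1 ≤ k → k ≤ t - 1 → (1 : F) ≠ aSeq a k) ∨
    (∀ k : ℕ, 1 ≤ k → k ≤ t - 1 → (-1 : F) ≠ aSeq a k) := by
  left
  intro k hk1 hk2 heq
  set φ := algebraMap F (AlgebraicClosure F) with hφ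
  have hω : ω ^ 2 + φ a * ω + 1 = 0 := by
    simpa [map_add, map_mul, map_pow, map_one, aeval_X, aeval_C] using hroot
  have hq3 : 3 ≤ q := by
    obtain ⟨m, hm⟩ := hqodd
    have := Fintype.one_lt_card (α := F)
    omega
  have h2t : 2 * t = q + 1 := by
    obtain ⟨m, hm⟩ := hqodd
    have hg : Nat.gcd 2 (q + 1) = 2 := Nat.gcd_eq_left ⟨m + 1, by omega⟩
    rw [hg] at ht
    omega
  have hω0 : ω ≠ 0 := by
    intro h
    rw [h] at hω
    simp at hω
  have hωn : ∀ n : ℕ, 0 < n → n < q + 1 → ω ^ n ≠ 1 := by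
    intro n hn hn' h
    have hd := orderOf_dvd_of_pow_eq_one h
    rw [hord] at hd
    exact absurd (Nat.le_of_dvd hn hd) (by omega)
  have key := alph_key (φ a) ω hω
  have nz : ∀ n : ℕ, 1 ≤ n → n ≤ t - 1 → alph a n ≠ 0 := by
    intro n h1 h2 h0
    have kn := key n
    rw [← alph_map φ a, h0, map_zero, zero_mul, zero_mul] at kn
    have h5 : ω ^ (2 * n) - 1 = 0 := by
      rcases mul_eq_zero.mp kn.symm with h | h
      · rcases mul_eq_zero.mp h with h | h
        · exact absurd h (pow_ne_zero _ (by norm_num))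
        · exact h
      · exact absurd h hω0
    exact hωn (2 * n) (by omega) (by omega) (sub_eq_zero.mp h5)
  have ratio : ∀ j : ℕ, 1 ≤ j → j ≤ t - 1 → aSeq a j * alph a j = alph a (j + 1) := by
    intro j hj
    induction j, hj using Nat.le_induction with
    | base => intro _; simp [aSeq, alph]
    | succ j hj ih =>
      intro hle
      have hj' : j ≤ t - 1 := by omega
      have h1 := ih hj'
      have h2 := nz j hj hj'
      have h3 := nz (j + 1) (by omega) hle
      have hne : aSeq a j ≠ 0 := by
        intro h
        rw [h, zero_mul] at h1
        exact h3 h1.symm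
      have hinv : (aSeq a j)⁻¹ * alph a (j + 1) = alph a j := by
        rw [← h1, ← mul_assoc, inv_mul_cancel₀ hne, one_mul]
      rw [show aSeq a (j + 1) = a - (aSeq a j)⁻¹ from rfl,
        show alph a (j + 1 + 1) = a * alph a (j + 1) - alph a j from rfl,
        sub_mul, hinv]
  have hax : alph a (k + 1) = alph a k := by
    have h := ratio k hk1 hk2
    rw [← heq, one_mul] at h
    exact h.symm
  have hax' : alph (φ a) (k + 1) = alph (φ a) k := by
    rw [← alph_map φ a, ← alph_map φ a, hax]
  have E1 := key (k + 1)
  have E2 := key k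
  rw [hax'] at E1
  have h3 : (-1 : AlgebraicClosure F) ^ k * (ω * ((ω + 1) * (ω ^ (2 * k + 1) - 1))) = 0 := by
    linear_combination ω * E2 - E1
  have hne1 : ((-1 : AlgebraicClosure F) ^ k) ≠ 0 := pow_ne_zero _ (by norm_num)
  have hωp1 : ω + 1 ≠ 0 := by
    intro h
    have hω2 : ω ^ 2 = 1 := by
      have : ω = -1 := by linear_combination h
      rw [this]; ring
    exact hωn 2 (by omega) (by omega) hω2
  have h4 : ω ^ (2 * k + 1) - 1 = 0 := by
    rcases mul_eq_zero.mp h3 with h | h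
    · exact absurd h hne1
    rcases mul_eq_zero.mp h with h | h
    · exact absurd h hω0
    rcases mul_eq_zero.mp h with h | h
    · exact absurd h hωp1
    · exact h
  have hd := orderOf_dvd_of_pow_eq_one (sub_eq_zero.mp h4)
  rw [hord] at hd
  obtain ⟨c, hc⟩ := hd
  obtain ⟨m, hm⟩ := hqodd
  have h5 : 2 * k + 1 = 2 * ((m + 1) * c) := by rw [hc, hm]; ring
  omega


end
end

section
/- Suppose q is odd and that b = 1 or b = −1. Extend the sequence (b_ℓ) to all ℓ ≥ 0 by the recursion b_{ℓ+1} = a − b_ℓ⁻¹ (so that b_t = b₀ = b and b_{t+1} = b₁). Then for all 0 ≤ ℓ ≤ t−1 one has b_ℓ·b_{t−ℓ} = 1 and b_ℓ + b_{t−ℓ+1} = a. -/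
open Polynomial

noncomputable section

theorem stmt16 (F : Type*) [Field F] [Fintype F] (q : ℕ) (hq : Fintype.card F = q)
    (a : F) (hirr : Irreducible (X ^ 2 + C a * X + 1 : F[X]))
    (ω : AlgebraicClosure F) (hroot : aeval ω (X ^ 2 + C a * X + 1 : F[X]) = 0)
    (hord : orderOf ω = q + 1)
    (hqodd : Odd q) (t : ℕ) (ht : t = (q + 1) / Nat.gcd 2 (q + 1)) (b : F)
    (hb : ∀ k : ℕ, 1 ≤ k → k ≤ t - 1 → b ≠ aSeq a k)
    (hb1 : b = 1 ∨ b = -1) :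
    ∀ l : ℕ, l ≤ t - 1 →
      bSeq a b l * bSeq a b (t - l) = 1 ∧
      bSeq a b l + bSeq a b (t - l + 1) = a := by
  have hq2 : 2 ≤ q := hq ▸ Fintype.one_lt_card
  obtain ⟨m, hm⟩ := hqodd
  have hm1 : 1 ≤ m := by omega
  have hgcd : Nat.gcd 2 (q + 1) = 2 := Nat.gcd_eq_left ⟨m + 1, by omega⟩
  have ht' : t = m + 1 := by rw [ht, hgcd]; omega
  have htq : q + 1 = 2 * t := by omega
  have ht2 : 2 ≤ t := by omega
  -- basic facts about b
  have hbne : b ≠ 0 := by rcases hb1 with h | h <;> subst h <;> norm_num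
  have hbb : b * b = 1 := by rcases hb1 with h | h <;> subst h <;> norm_num
  have hbinv : b⁻¹ = b := by rcases hb1 with h | h <;> subst h <;> norm_num
  -- facts about ω
  have hω : ω ^ 2 + algebraMap F (AlgebraicClosure F) a * ω + 1 = 0 := by
    simpa using hroot
  have hω0 : ω ≠ 0 := by
    intro h
    rw [h] at hω
    simp at hω
  have hωord : ω ^ (q + 1) = 1 := by rw [← hord]; exact pow_orderOf_eq_one ω
  have hω21 : ω ^ 2 ≠ 1 := by
    intro h
    have h2 := orderOf_dvd_of_pow_eq_one h
    rw [hord] at h2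
    have := Nat.le_of_dvd (by norm_num) h2
    omega
  -- the key closed formula
  have key : ∀ n : ℕ, (ω ^ 2 - 1) * ω ^ n * algebraMap F (AlgebraicClosure F) (alph a n)
      = (-1) ^ (n + 1) * ω * (ω ^ (2 * n) - 1) := by
    intro n
    induction n using Nat.twoStepInduction with
    | zero => simp [alph]
    | one => simp [alph]; ring
    | more n ih1 ih2 =>
      rw [show alph a (n + 2) = a * alph a (n + 1) - alph a n from rfl, map_sub, map_mul]
      linear_combination
        (algebraMap F (AlgebraicClosure F) a * ω) * ih2 - ω ^ 2 * ih1 +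
          ((-1) ^ n * ω * (ω ^ (2 * n + 2) - 1)) * hω
  -- characterize vanishing of alph
  have hAzero : ∀ n : ℕ, alph a n = 0 ↔ t ∣ n := by
    intro n
    constructor
    · intro h
      have h2 := key n
      rw [h, map_zero, mul_zero] at h2
      have h3 : ω ^ (2 * n) - 1 = 0 := by
        have hne : ((-1 : AlgebraicClosure F) ^ (n + 1) * ω) ≠ 0 := by
          apply mul_ne_zero _ hω0
          simp
        rcases mul_eq_zero.1 h2.symm with h4 | h4
        · exact absurd h4 hne
        · exact h4
      have h4 := orderOf_dvd_of_pow_eq_one (sub_eq_zero.1 h3)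
      rw [hord, htq] at h4
      exact (Nat.mul_dvd_mul_iff_left (by norm_num : 0 < 2)).1 h4
    · rintro ⟨c, hc⟩
      have hpow : ω ^ (2 * n) = 1 := by
        rw [hc, show 2 * (t * c) = (q + 1) * c by rw [← Nat.mul_assoc, ← htq],
          pow_mul, hωord, one_pow]
      have h2 := key n
      rw [hpow, sub_self, mul_zero] at h2
      have h3 : algebraMap F (AlgebraicClosure F) (alph a n) = 0 := by
        rcases mul_eq_zero.1 h2 with h4 | h4
        · exact absurd h4 (mul_ne_zero (sub_ne_zero.2 hω21) (pow_ne_zero n hω0))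
        · exact h4
      exact (_root_.map_eq_zero (algebraMap F (AlgebraicClosure F))).1 h3
  have hAne : ∀ j, 1 ≤ j → j ≤ t - 1 → alph a j ≠ 0 := by
    intro j h1 h2 h3
    have h4 := (hAzero j).1 h3
    have := Nat.le_of_dvd (by omega) h4
    omega
  have hAt : alph a t = 0 := (hAzero t).2 dvd_rfl
  -- aSeq in terms of alph
  have haS : ∀ k, 1 ≤ k → k ≤ t - 1 → aSeq a k = alph a (k + 1) / alph a k := by
    intro k
    induction k with
    | zero => omega
    | succ k ih =>
      intro _ hk2
      match k, ih with
      | 0, _ => simp [aSeq, alph]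
      | (j + 1), ih =>
        have h1 : aSeq a (j + 1) = alph a (j + 2) / alph a (j + 1) :=
          ih (by omega) (by omega)
        have h2 : alph a (j + 2) ≠ 0 := hAne _ (by omega) (by omega)
        rw [show aSeq a (j + 1 + 1) = a - (aSeq a (j + 1))⁻¹ from rfl, h1, inv_div,
          show j + 1 + 1 = j + 2 from rfl,
          show alph a (j + 3) = a * alph a (j + 2) - alph a (j + 1) from rfl,
          eq_div_iff h2, sub_mul, div_mul_cancel₀ _ h2]
  -- bet is nonvanishing up to t
  have hB : ∀ j, j ≤ t → bet a b j ≠ 0 := by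
    intro j hj
    match j with
    | 0 => simp [bet]
    | (n + 1) =>
      intro hzero
      rw [show bet a b (n + 1) = b * alph a (n + 1) - alph a n from rfl] at hzero
      by_cases hA : alph a (n + 1) = 0
      · have hnt : t ∣ n + 1 := (hAzero _).1 hA
        have hn : n + 1 = t := by
          have := Nat.le_of_dvd (by omega) hnt
          omega
        rw [hA, mul_zero, zero_sub, neg_eq_zero] at hzero
        exact hAne n (by omega) (by omega) hzero
      · have hn1 : n + 1 ≤ t - 1 := by
          by_contra hc
          have hnn : n + 1 = t := by omega
          exact hA (hnn ▸ hAt)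
        match n with
        | 0 =>
          simp [alph] at hzero
          exact hbne hzero
        | (i + 1) =>
          rw [show i + 1 + 1 = i + 2 from rfl] at hzero hA hn1
          have hAi : alph a (i + 1) ≠ 0 := hAne _ (by omega) (by omega)
          have hbv : b = alph a (i + 1) / alph a (i + 2) := by
            rw [eq_div_iff hA]
            linear_combination hzero
          have hS : aSeq a (i + 1) = alph a (i + 2) / alph a (i + 1) :=
            haS (i + 1) (by omega) (by omega)
          refine hb (i + 1) (by omega) (by omega) ?_
          rw [hS, ← inv_div, ← hbv, hbinv]
  -- bet recursion
  have hBrec : ∀ n, bet a b (n + 2) = a * bet a b (n + 1) - bet a b n := by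
    intro n
    match n with
    | 0 => simp [bet, alph]; ring
    | (i + 1) => simp [bet, alph]; ring
  -- bSeq in terms of bet
  have hbS : ∀ l, l ≤ t → bSeq a b l = bet a b (l + 1) / bet a b l := by
    intro l
    induction l with
    | zero => intro _; simp [bSeq, bet, alph]
    | succ l ih =>
      intro hl
      have h1 : bet a b (l + 1) ≠ 0 := hB _ (by omega)
      rw [show bSeq a b (l + 1) = a - (bSeq a b l)⁻¹ from rfl, ih (by omega), inv_div,
        hBrec l, eq_div_iff h1, sub_mul, div_mul_cancel₀ _ h1]
  -- b_t = b
  obtain ⟨s, hs⟩ : ∃ s, t = s + 2 := ⟨t - 2, by omega⟩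
  have hAt1 : alph a (t + 1) = -alph a (t - 1) := by
    rw [hs, show s + 2 + 1 = s + 3 from rfl,
      show alph a (s + 3) = a * alph a (s + 2) - alph a (s + 1) from rfl,
      show s + 2 - 1 = s + 1 from rfl, ← hs, hAt]
    ring
  have hbt : bSeq a b t = b := by
    have h1 : bet a b (t + 1) = b * alph a (t + 1) - alph a t := rfl
    have h2 : bet a b t = b * alph a t - alph a (t - 1) := by
      rw [hs]
      rfl
    have h3 : alph a (t - 1) ≠ 0 := hAne _ (by omega) (by omega)
    have hden : b * 0 - alph a (t - 1) ≠ 0 := by simpa using h3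
    rw [hbS t le_rfl, h1, h2, hAt, hAt1, div_eq_iff hden]
    ring
  -- main product identity
  have main : ∀ l, l ≤ t - 1 → bSeq a b l * bSeq a b (t - l) = 1 := by
    intro l
    induction l with
    | zero =>
      intro _
      rw [Nat.sub_zero, hbt, show bSeq a b 0 = b from rfl]
      exact hbb
    | succ l ih =>
      intro hl
      have hP := ih (by omega)
      have hz : bSeq a b (t - l - 1) ≠ 0 := by
        rw [hbS _ (by omega)]
        exact div_ne_zero (hB _ (by omega)) (hB _ (by omega))
      have h2 : bSeq a b (t - l) = (bSeq a b l)⁻¹ := (inv_eq_of_mul_eq_one_right hP).symm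
      have h3 : bSeq a b (t - l) = a - (bSeq a b (t - l - 1))⁻¹ := by
        rw [show t - l = (t - l - 1) + 1 by omega]
        rfl
      have h4 : bSeq a b (l + 1) = (bSeq a b (t - l - 1))⁻¹ := by
        rw [show bSeq a b (l + 1) = a - (bSeq a b l)⁻¹ from rfl, ← h2, h3]
        ring
      rw [show t - (l + 1) = t - l - 1 by omega, h4, inv_mul_cancel₀ hz]
  intro l hl
  refine ⟨main l hl, ?_⟩
  have hP := main l hl
  have h3 : (bSeq a b (t - l))⁻¹ = bSeq a b l := inv_eq_of_mul_eq_one_left hP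
  rw [show bSeq a b (t - l + 1) = a - (bSeq a b (t - l))⁻¹ from rfl, h3]
  ring

end
end

section
/- For every 1 ≤ k ≤ t−1 one has α_{k−1}(a) ≠ 0 and, in PSL₂(F), (u(a)·s)^k = u(a_k)·s·u(−α_{k−2}(a)·α_{k−1}(a))·h(α_{k−1}(a)). Moreover, if q is odd and b ∈ F satisfies b ≠ a_k for all 1 ≤ k ≤ t−1, then for every 0 ≤ k ≤ t−1 one has β_{k−1}(a,b) ≠ 0 and (u(a)·s)^k·(u(b)·s·u(−b)) = u(b_k)·s·u(−β_{k−1}(a,b)·γ_{k−1}(a,b))·h(β_{k−1}(a,b)). -/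
open Polynomial

noncomputable section

section AuxLemmas

variable {F : Type*} [Field F]

lemma alph_add_two (a : F) (n : ℕ) : alph a (n+2) = a * alph a (n+1) - alph a n := rfl

lemma alph_det (a : F) (n : ℕ) :
    alph a (n+1) * alph a (n+1) - alph a (n+2) * alph a n = 1 := by
  induction n with
  | zero => simp [alph]
  | succ n ih =>
    rw [alph_add_two a (n+1)]
    rw [alph_add_two a n] at *
    linear_combination ih

lemma bet_add_two (a b : F) (n : ℕ) : bet a b (n+2) = a * bet a b (n+1) - bet a b n := by
  cases n with
  | zero => simp [bet, alph]; ring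
  | succ n =>
    show b * alph a (n+3) - alph a (n+2)
        = a * (b * alph a (n+2) - alph a (n+1)) - (b * alph a (n+1) - alph a n)
    rw [alph_add_two a (n+1), alph_add_two a n]
    ring

lemma gam_add_two (a b : F) (n : ℕ) : gam a b (n+2) = a * gam a b (n+1) - gam a b n := by
  unfold gam
  rw [alph_add_two, bet_add_two]
  ring

lemma bg_det (a b : F) (n : ℕ) :
    bet a b n * gam a b (n+1) - bet a b (n+1) * gam a b n = 1 := by
  induction n with
  | zero => simp [bet, gam, alph]
  | succ n ih =>
    rw [bet_add_two, gam_add_two]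
    linear_combination ih

def psl (A : Matrix (Fin 2) (Fin 2) F) (h : A.det = 1) : PSL2 F :=
  QuotientGroup.mk ⟨A, h⟩

lemma psl_mul (A B : Matrix (Fin 2) (Fin 2) F) (hA : A.det = 1) (hB : B.det = 1) :
    psl A hA * psl B hB = psl (A * B) (by rw [Matrix.det_mul, hA, hB, one_mul]) := rfl

lemma psl_congr {A B : Matrix (Fin 2) (Fin 2) F} (hA : A.det = 1) (hB : B.det = 1)
    (h : A = B) : psl A hA = psl B hB := by subst h; rfl

def negSL : SL2 F := ⟨-1, by simp [Matrix.det_neg]⟩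

lemma negSL_center : (negSL : SL2 F) ∈ Subgroup.center (SL2 F) := by
  refine Subgroup.mem_center_iff.mpr (fun g => ?_)
  refine Subtype.coe_injective ?_
  show (g : Matrix (Fin 2) (Fin 2) F) * (-1) = (-1) * (g : Matrix (Fin 2) (Fin 2) F)
  simp

lemma psl_neg (A : Matrix (Fin 2) (Fin 2) F) (h : A.det = 1) (h' : (-A).det = 1) :
    psl (-A) h' = psl A h := by
  have : psl (-A) h' = (QuotientGroup.mk negSL : PSL2 F) * psl A h := by
    show QuotientGroup.mk _ = QuotientGroup.mk (negSL * _)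
    congr 1
    refine Subtype.coe_injective ?_
    show -A = (-1 : Matrix (Fin 2) (Fin 2) F) * A
    simp
  rw [this, (QuotientGroup.eq_one_iff _).mpr negSL_center, one_mul]

lemma psl_pow (A : Matrix (Fin 2) (Fin 2) F) (h : A.det = 1) (k : ℕ) :
    (psl A h) ^ k = psl (A ^ k) (by rw [Matrix.det_pow, h, one_pow]) := by
  induction k with
  | zero => simp [psl]; rfl
  | succ k ih => rw [pow_succ, ih, psl_mul]; exact psl_congr _ _ (pow_succ A k).symm

lemma psl_eq_of_eq_or_neg {A B : Matrix (Fin 2) (Fin 2) F} (hA : A.det = 1) (hB : B.det = 1)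
    (h : A = B ∨ A = -B) : psl A hA = psl B hB := by
  rcases h with h | h
  · exact psl_congr _ _ h
  · have h' : (-B).det = 1 := by rw [← h]; exact hA
    exact (psl_congr hA h' h).trans (psl_neg B hB h')

lemma uu_eq (x : F) : uu x = psl !![1, x; 0, 1] (by simp [Matrix.det_fin_two_of]) := rfl

lemma ss_eq : (ss : PSL2 F) = psl !![0, 1; -1, 0] (by simp [Matrix.det_fin_two_of]) := rfl

lemma hh_eq (y : F) (hy : y ≠ 0) :
    hh y hy = psl !![y, 0; 0, y⁻¹] (by simp [Matrix.det_fin_two_of, mul_inv_cancel₀ hy]) := rfl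

lemma rhs_det (c x y : F) (hy : y ≠ 0) :
    (!![-(c*y), (-(c*x)+1)*y⁻¹; -y, -(x*y⁻¹)] : Matrix (Fin 2) (Fin 2) F).det = 1 := by
  rw [Matrix.det_fin_two_of]
  field_simp
  ring

lemma rhs_eq (c x y : F) (hy : y ≠ 0) :
    uu c * ss * uu x * hh y hy
      = psl !![-(c*y), (-(c*x)+1)*y⁻¹; -y, -(x*y⁻¹)] (rhs_det c x y hy) := by
  rw [uu_eq, ss_eq, uu_eq, hh_eq, psl_mul, psl_mul, psl_mul]
  refine psl_congr _ _ ?_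
  rw [Matrix.mul_fin_two, Matrix.mul_fin_two, Matrix.mul_fin_two]
  congr 1 <;> ring

lemma lhs_eq (a : F) : uu a * ss = psl !![-a, 1; -1, 0] (by simp [Matrix.det_fin_two_of]) := by
  rw [uu_eq, ss_eq, psl_mul]
  refine psl_congr _ _ ?_
  rw [Matrix.mul_fin_two]
  congr 1 <;> ring

lemma pmat_eq (b : F) : uu b * ss * uu (-b)
    = psl !![-b, b*b+1; -1, b] (by rw [Matrix.det_fin_two_of]; ring) := by
  rw [uu_eq, ss_eq, uu_eq, psl_mul, psl_mul]
  refine psl_congr _ _ ?_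
  rw [Matrix.mul_fin_two, Matrix.mul_fin_two]
  congr 1 <;> ring

lemma neg_mat (p q r s : F) : -(!![p, q; r, s]) = !![-p, -q; -r, -s] := by
  ext i j; fin_cases i <;> fin_cases j <;> simp

lemma Mpow (a : F) (j : ℕ) :
    (!![-a, 1; -1, 0] : Matrix (Fin 2) (Fin 2) F) ^ (j+1)
      = !![(-1)^(j+1) * alph a (j+2), (-1)^j * alph a (j+1);
           (-1)^(j+1) * alph a (j+1), (-1)^j * alph a j] := by
  induction j with
  | zero =>
    rw [pow_one]
    simp [alph]
  | succ j ih =>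
    rw [pow_succ, ih, Matrix.mul_fin_two]
    rw [alph_add_two a (j+1), alph_add_two a j]
    congr 1 <;> ring

lemma Mpow_sign (a : F) (j : ℕ) :
    (!![-a, 1; -1, 0] : Matrix (Fin 2) (Fin 2) F) ^ (j+1)
        = !![alph a (j+2), -alph a (j+1); alph a (j+1), -alph a j] ∨
    (!![-a, 1; -1, 0] : Matrix (Fin 2) (Fin 2) F) ^ (j+1)
        = -(!![alph a (j+2), -alph a (j+1); alph a (j+1), -alph a j]) := by
  rcases Nat.even_or_odd j with hj | hj
  · right
    rw [Mpow, neg_mat, hj.neg_one_pow, hj.add_one.neg_one_pow]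
    congr 1 <;> ring
  · left
    rw [Mpow, hj.neg_one_pow, hj.add_one.neg_one_pow]
    congr 1 <;> ring

end AuxLemmas

theorem stmt19 (F : Type*) [Field F] [Fintype F] (q : ℕ) (hq : Fintype.card F = q)
    (a : F) (hirr : Irreducible (X ^ 2 + C a * X + 1 : F[X]))
    (ω : AlgebraicClosure F) (hroot : aeval ω (X ^ 2 + C a * X + 1 : F[X]) = 0)
    (hord : orderOf ω = q + 1) (t : ℕ) (ht : t = (q + 1) / Nat.gcd 2 (q + 1)) :
    (∀ k : ℕ, 1 ≤ k → k ≤ t - 1 →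
      ∃ h : alph a k ≠ 0,
        (uu a * ss : PSL2 F) ^ k =
          uu (aSeq a k) * ss * uu (-(alph a (k - 1) * alph a k)) * hh (alph a k) h) ∧
    (Odd q → ∀ b : F, (∀ k : ℕ, 1 ≤ k → k ≤ t - 1 → b ≠ aSeq a k) →
      ∀ k : ℕ, k ≤ t - 1 →
        ∃ h : bet a b k ≠ 0,
          (uu a * ss : PSL2 F) ^ k * (uu b * ss * uu (-b)) =
            uu (bSeq a b k) * ss * uu (-(bet a b k * gam a b k)) * hh (bet a b k) h) := by
  classical
  have hq2 : 2 ≤ q := by rw [← hq]; exact Fintype.one_lt_card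
  have hroot' : ω^2 + (algebraMap F (AlgebraicClosure F) a) * ω + 1 = 0 := by
    simpa [map_add, map_mul, map_pow, aeval_X, aeval_C] using hroot
  have hω0 : ω ≠ 0 := by
    intro h
    rw [h] at hroot'
    simp at hroot'
  have hωinv : ω * ω⁻¹ = 1 := mul_inv_cancel₀ hω0
  have ha : algebraMap F (AlgebraicClosure F) a = -ω - ω⁻¹ := by
    have h2 : (algebraMap F (AlgebraicClosure F) a) * ω = (-ω - ω⁻¹) * ω := by
      linear_combination hroot' + hωinv
    exact mul_right_cancel₀ hω0 h2
  have key : ∀ n : ℕ, (algebraMap F (AlgebraicClosure F)) (alph a n) * (ω - ω⁻¹)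
      = (-1)^(n+1) * (ω^n - (ω⁻¹)^n) := by
    intro n
    induction n using Nat.twoStepInduction with
    | zero => simp [alph]
    | one => simp [alph]
    | more n ih1 ih2 =>
      rw [alph_add_two, map_sub, map_mul, ha]
      linear_combination (-ω - ω⁻¹) * ih2 - ih1 + (-1 : AlgebraicClosure F)^(n+1) * (ω^n - (ω⁻¹)^n) * hωinv
  have hWne : ω - ω⁻¹ ≠ 0 := by
    intro h
    have hx : ω = ω⁻¹ := sub_eq_zero.mp h
    have h2 : ω^2 = 1 := by rw [pow_two]; nth_rewrite 2 [hx]; exact hωinv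
    have hd := orderOf_dvd_of_pow_eq_one h2
    rw [hord] at hd
    have := Nat.le_of_dvd (by norm_num) hd
    omega
  have hzero : ∀ n : ℕ, alph a n = 0 ↔ (q+1) ∣ 2*n := by
    intro n
    constructor
    · intro h
      have hk := key n
      rw [h, map_zero, zero_mul] at hk
      have h1 : ω^n - (ω⁻¹)^n = 0 := by
        rcases mul_eq_zero.mp hk.symm with h' | h'
        · exact absurd h' (pow_ne_zero _ (by norm_num))
        · exact h'
      have hx : ω^n = (ω⁻¹)^n := sub_eq_zero.mp h1
      have h2 : ω^(2*n) = 1 := by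
        calc ω^(2*n) = ω^n * ω^n := by rw [two_mul, pow_add]
        _ = ω^n * (ω⁻¹)^n := by rw [hx]
        _ = (ω * ω⁻¹)^n := (mul_pow _ _ _).symm
        _ = 1 := by rw [hωinv, one_pow]
      rw [← hord]
      exact orderOf_dvd_of_pow_eq_one h2
    · intro h
      have h2 : ω^(2*n) = 1 := by
        rw [← hord] at h
        exact orderOf_dvd_iff_pow_eq_one.mp h
      have hx : ω^n - (ω⁻¹)^n = 0 := by
        have hne : ω^n ≠ 0 := pow_ne_zero _ hω0
        have hmul : ω^n * (ω^n - (ω⁻¹)^n) = 0 := by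
          have e1 : ω^n * ω^n = ω^(2*n) := by rw [two_mul, pow_add]
          rw [mul_sub, e1, h2, ← mul_pow, hωinv, one_pow, sub_self]
        rcases mul_eq_zero.mp hmul with h' | h'
        · exact absurd h' hne
        · exact h'
      have hk := key n
      rw [hx, mul_zero] at hk
      rcases mul_eq_zero.mp hk with h' | h'
      · exact (algebraMap F (AlgebraicClosure F)).injective (by rw [h', map_zero])
      · exact absurd h' hWne
  have hnz : ∀ j : ℕ, 1 ≤ j → j ≤ t - 1 → alph a j ≠ 0 := by
    intro j h1 h2 hcon
    have hd := (hzero j).mp hcon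
    have hle := Nat.le_of_dvd (by omega) hd
    rcases Nat.even_or_odd q with he | ho
    · have hodd : ¬ (2 ∣ q + 1) := by
        obtain ⟨m, hm⟩ := he
        omega
      have h12 : Nat.gcd 2 (q+1) = 1 ∨ Nat.gcd 2 (q+1) = 2 :=
        (Nat.dvd_prime Nat.prime_two).mp (Nat.gcd_dvd_left _ _)
      have hg : Nat.gcd 2 (q+1) = 1 := by
        rcases h12 with h' | h'
        · exact h'
        · exact absurd (h' ▸ Nat.gcd_dvd_right 2 (q+1)) hodd
      have htq : t = q + 1 := by rw [ht, hg, Nat.div_one]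
      have hcop : Nat.Coprime (q+1) 2 := Nat.coprime_comm.mp hg
      have hdj : (q+1) ∣ j := hcop.dvd_of_dvd_mul_left hd
      have := Nat.le_of_dvd (by omega) hdj
      omega
    · have h2d : 2 ∣ q + 1 := by
        obtain ⟨m, hm⟩ := ho
        omega
      have hg : Nat.gcd 2 (q+1) = 2 := Nat.gcd_eq_left h2d
      have h2t : 2 * t = q + 1 := by rw [ht, hg]; exact Nat.mul_div_cancel' h2d
      omega
  have haseq : ∀ j : ℕ, j + 1 ≤ t - 1 → aSeq a (j+1) * alph a (j+1) = alph a (j+2) := by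
    intro j
    induction j with
    | zero =>
      intro _
      show (a - (aSeq a 0)⁻¹) * alph a 1 = alph a 2
      simp [aSeq, alph]
    | succ j ih =>
      intro hle
      have ih' := ih (by omega)
      have hnz2 : alph a (j+2) ≠ 0 := hnz (j+2) (by omega) (by omega)
      have hs : aSeq a (j+1) ≠ 0 := by
        intro h0
        rw [h0, zero_mul] at ih'
        exact hnz2 ih'.symm
      show (a - (aSeq a (j+1))⁻¹) * alph a (j+2) = alph a (j+3)
      rw [alph_add_two a (j+1)]
      field_simp
      linear_combination ih'
  constructor
  · -- part 1
    intro k hk1 hk2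
    obtain ⟨j, rfl⟩ : ∃ j, k = j + 1 := ⟨k - 1, by omega⟩
    have hnzk : alph a (j+1) ≠ 0 := hnz _ (by omega) hk2
    refine ⟨hnzk, ?_⟩
    simp only [Nat.add_sub_cancel]
    rw [lhs_eq, psl_pow, rhs_eq _ _ _ hnzk]
    have hA := haseq j hk2
    have hDet := alph_det a j
    have e00 : -(aSeq a (j+1) * alph a (j+1)) = -(alph a (j+2)) := by rw [hA]
    have e01 : (-(aSeq a (j+1) * -(alph a j * alph a (j+1))) + 1) * (alph a (j+1))⁻¹
        = alph a (j+1) := by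
      field_simp
      linear_combination alph a j * hA - hDet
    have e11 : (-(-(alph a j * alph a (j+1)) * (alph a (j+1))⁻¹)) = alph a j := by
      field_simp
    refine Eq.symm (psl_eq_of_eq_or_neg _ _ ?_)
    rw [e00, e01, e11]
    rcases Mpow_sign a j with h' | h'
    · right
      rw [h', neg_mat]
      congr 1 <;> ring
    · left
      rw [h', neg_mat]
      congr 1 <;> ring
  · -- part 2
    intro hoq b hb k hk
    have h2d : 2 ∣ q + 1 := by
      obtain ⟨m, hm⟩ := hoq
      omega
    have hg : Nat.gcd 2 (q+1) = 2 := Nat.gcd_eq_left h2d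
    have h2t : 2 * t = q + 1 := by rw [ht, hg]; exact Nat.mul_div_cancel' h2d
    have hq3 : 3 ≤ q := by
      rcases hoq with ⟨m, hm⟩
      omega
    have ht2 : 2 ≤ t := by omega
    have halpht : alph a t = 0 := (hzero t).mpr ⟨1, by omega⟩
    have sym : ∀ n : ℕ, n ≤ t → alph a (t - n) = alph a (t-1) * alph a n := by
      intro n
      induction n using Nat.twoStepInduction with
      | zero =>
        intro _
        rw [Nat.sub_zero, halpht]
        simp [alph]
      | one =>
        intro _
        rw [show alph a 1 = 1 from rfl, mul_one]
      | more n ih1 ih2 =>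
        intro h
        have g1 := ih1 (by omega)
        have g2 := ih2 (by omega)
        have hrec : alph a (t - n) = a * alph a (t - (n+1)) - alph a (t - (n+2)) := by
          rw [show t - n = (t - (n+2)) + 2 by omega, show t - (n+1) = (t - (n+2)) + 1 by omega]
          exact alph_add_two a _
        rw [alph_add_two a n]
        linear_combination hrec + a * g2 - g1
    have hc : alph a (t-1) * alph a (t-1) = 1 := by
      have hs := sym (t-1) (by omega)
      rw [show t - (t-1) = 1 by omega, show alph a 1 = 1 from rfl] at hs
      exact hs.symm
    have hcne : alph a (t-1) ≠ 0 := by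
      intro h0
      rw [h0, mul_zero] at hc
      exact one_ne_zero hc.symm
    have hbnz : ∀ i : ℕ, i ≤ t - 1 → bet a b i ≠ 0 := by
      intro i hi
      rcases i with _ | m
      · exact one_ne_zero
      · intro h0
        have hb1 : b * alph a (m+1) = alph a m := by
          have e : bet a b (m+1) = b * alph a (m+1) - alph a m := rfl
          rw [e] at h0
          linear_combination h0
        obtain ⟨i0, hi0⟩ : ∃ i0, t - (m+1) = i0 + 1 := ⟨t - (m+1) - 1, by omega⟩
        have hs1 := sym (t - (m+1)) (by omega)
        rw [show t - (t - (m+1)) = m + 1 by omega, hi0] at hs1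
        have hs0 := sym (t - m) (by omega)
        rw [show t - (t - m) = m by omega, show t - m = i0 + 2 by omega] at hs0
        have hA := haseq i0 (by omega)
        have hAnz : alph a (i0+1) ≠ 0 := hnz _ (by omega) (by omega)
        have hbj : b * alph a (i0+1) = alph a (i0+2) := by
          have h3 : alph a (t-1) * (b * alph a (i0+1)) = alph a (t-1) * alph a (i0+2) := by
            linear_combination -b * hs1 + hb1 + hs0
          exact mul_left_cancel₀ hcne h3
        have hbeq : b = aSeq a (i0+1) :=
          mul_right_cancel₀ hAnz (hbj.trans hA.symm)
        exact hb (i0+1) (by omega) (by omega) hbeq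
    have hbseq : ∀ i : ℕ, i ≤ t - 1 → bSeq a b i * bet a b i = bet a b (i+1) := by
      intro i
      induction i with
      | zero =>
        intro _
        show b * bet a b 0 = bet a b 1
        simp [bet, alph]
      | succ i ih =>
        intro hle
        have ih' := ih (by omega)
        have h1 : bet a b i ≠ 0 := hbnz i (by omega)
        have h2 : bet a b (i+1) ≠ 0 := hbnz (i+1) (by omega)
        have hsne : bSeq a b i ≠ 0 := by
          intro h0
          rw [h0, zero_mul] at ih'
          exact h2 ih'.symm
        show (a - (bSeq a b i)⁻¹) * bet a b (i+1) = bet a b (i+2)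
        rw [bet_add_two]
        field_simp
        linear_combination ih'
    rcases k with _ | j
    · refine ⟨one_ne_zero, ?_⟩
      rw [pow_zero, one_mul, pmat_eq, rhs_eq (bSeq a b 0) (-(bet a b 0 * gam a b 0)) (bet a b 0) (by exact one_ne_zero)]
      refine psl_congr _ _ ?_
      have eb : bet a b 0 = 1 := rfl
      have eg : gam a b 0 = b := by simp [gam, bet, alph]
      have es : bSeq a b 0 = b := rfl
      rw [eb, eg, es]
      congr 1 <;> field_simp <;> ring
    · have hbk : bet a b (j+1) ≠ 0 := hbnz (j+1) hk
      refine ⟨hbk, ?_⟩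
      rw [lhs_eq, psl_pow, pmat_eq, psl_mul, rhs_eq _ _ _ hbk]
      have hB := hbseq (j+1) hk
      have hW := bg_det a b (j+1)
      have e00 : -(bSeq a b (j+1) * bet a b (j+1)) = -(bet a b (j+2)) := by rw [hB]
      have e01 : (-(bSeq a b (j+1) * -(bet a b (j+1) * gam a b (j+1))) + 1) * (bet a b (j+1))⁻¹
          = gam a b (j+2) := by
        field_simp
        linear_combination gam a b (j+1) * hB - hW
      have e11 : (-(-(bet a b (j+1) * gam a b (j+1)) * (bet a b (j+1))⁻¹)) = gam a b (j+1) := by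
        field_simp
      refine Eq.symm (psl_eq_of_eq_or_neg _ _ ?_)
      rw [e00, e01, e11]
      have hNP : !![alph a (j+2), -alph a (j+1); alph a (j+1), -alph a j]
            * !![-b, b*b+1; -1, b]
          = !![-(bet a b (j+2)), gam a b (j+2); -(bet a b (j+1)), gam a b (j+1)] := by
        rw [Matrix.mul_fin_two]
        have eb2 : bet a b (j+2) = b * alph a (j+2) - alph a (j+1) := rfl
        have eb1 : bet a b (j+1) = b * alph a (j+1) - alph a j := rfl
        have eg2 : gam a b (j+2) = alph a (j+2) + b * bet a b (j+2) := rfl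
        have eg1 : gam a b (j+1) = alph a (j+1) + b * bet a b (j+1) := rfl
        rw [eg2, eg1, eb2, eb1]
        congr 1 <;> ring
      rcases Mpow_sign a j with h' | h'
      · left
        rw [h', hNP]
      · right
        rw [h', neg_mul, hNP, neg_neg]

end
end
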